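/- Bound on the error polynomials of the error free transformation for Horner (Theorem 2, equation (14)): Let u be a real number with 0 < u, let n be a positive integer with 2n·u < 1, and let x, a_0, …, a_n be real numbers. Suppose s_n = a_n and, for every i = n−1, …, 0: p_i = s_{i+1}·x·(1+ε_i) with |ε_i| ≤ u, π_i = s_{i+1}·x − p_i, s_i = (p_i + a_i)·(1+δ_i) with |δ_i| ≤ u, and σ_i = (p_i + a_i) − s_i. Then Σ_{i=0}^{n−1} ( |π_i| + |σ_i| ) |x|^i ≤ γ_{2n} · Σ_{i=0}^n |a_i| |x|^i. -/
import Mathlib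

private lemma eft_pow_aux (u : ℝ) (hu : 0 ≤ u) :
    ∀ m : ℕ, (m : ℝ) * u < 1 → (1 - (m : ℝ) * u) * (1 + u) ^ m ≤ 1 := by
  intro m
  induction m with
  | zero => simp
  | succ m ih =>
    intro h
    have hcast : ((m + 1 : ℕ) : ℝ) = (m : ℝ) + 1 := by push_cast; ring
    rw [hcast] at h ⊢
    have hm' : (m : ℝ) * u < 1 := by nlinarith
    have ihm := ih hm'
    have hpow : (0 : ℝ) ≤ (1 + u) ^ m := by positivity
    rw [pow_succ]
    nlinarith [mul_nonneg (mul_nonneg (by positivity : (0:ℝ) ≤ ((m:ℝ)+1) * u * u) hpow) hu,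
      mul_nonneg (mul_nonneg hu hu) hpow]

private lemma eft_sum_shift (f : ℕ → ℝ) (v : ℝ) (m : ℕ) :
    ∑ j ∈ Finset.range (m + 1), f j * v ^ j
      = f 0 + v * ∑ j ∈ Finset.range m, f (j + 1) * v ^ j := by
  rw [Finset.sum_range_succ']
  simp only [pow_zero, mul_one]
  rw [add_comm, Finset.mul_sum]
  congr 1
  apply Finset.sum_congr rfl
  intro j _
  rw [pow_succ]
  ring

/-- Bound on the error polynomials of the error free transformation for Horner
(Theorem 2, equation (14)). Here `γ_{2n} = 2n·u/(1 − 2n·u)`. -/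
theorem eft_horner_error_bound
    (u : ℝ) (hu : 0 < u) (n : ℕ) (hn : 1 ≤ n) (h2nu : 2 * (n : ℝ) * u < 1)
    (x : ℝ) (a s p π σ ε δ : ℕ → ℝ)
    (hεu : ∀ i < n, |ε i| ≤ u) (hδu : ∀ i < n, |δ i| ≤ u)
    (hsn : s n = a n)
    (hp : ∀ i < n, p i = s (i + 1) * x * (1 + ε i))
    (hπ : ∀ i < n, π i = s (i + 1) * x - p i)
    (hs : ∀ i < n, s i = (p i + a i) * (1 + δ i))
    (hσ : ∀ i < n, σ i = (p i + a i) - s i) :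
    ∑ i ∈ Finset.range n, (|π i| + |σ i|) * |x| ^ i ≤
      (2 * (n : ℝ) * u / (1 - 2 * (n : ℝ) * u)) *
        ∑ i ∈ Finset.range (n + 1), |a i| * |x| ^ i := by
  set v := |x| with hv
  have hv0 : 0 ≤ v := abs_nonneg x
  set T : ℕ → ℝ := fun i => ∑ j ∈ Finset.range (n + 1 - i), |a (i + j)| * v ^ j with hT
  set E : ℕ → ℝ := fun i => ∑ j ∈ Finset.range (n - i), (|π (i + j)| + |σ (i + j)|) * v ^ j
    with hE
  have hT0 : ∀ i, 0 ≤ T i := by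
    intro i
    apply Finset.sum_nonneg
    intro j _
    positivity
  -- recurrences
  have hTrec : ∀ i < n, T i = |a i| + v * T (i + 1) := by
    intro i hi
    have h1 : n + 1 - i = (n + 1 - (i + 1)) + 1 := by omega
    have h2 := eft_sum_shift (fun j => |a (i + j)|) v (n + 1 - (i + 1))
    have h3 : ∑ j ∈ Finset.range (n + 1 - (i + 1)), |a (i + (j + 1))| * v ^ j
        = ∑ j ∈ Finset.range (n + 1 - (i + 1)), |a (i + 1 + j)| * v ^ j := by
      apply Finset.sum_congr rfl
      intro j _
      have hij : i + (j + 1) = i + 1 + j := by omega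
      rw [hij]
    simp only [hT, h1, h2, Nat.add_zero, h3]
  have hErec : ∀ i < n, E i = (|π i| + |σ i|) + v * E (i + 1) := by
    intro i hi
    have h1 : n - i = (n - (i + 1)) + 1 := by omega
    have h2 := eft_sum_shift (fun j => |π (i + j)| + |σ (i + j)|) v (n - (i + 1))
    have h3 : ∑ j ∈ Finset.range (n - (i + 1)), (|π (i + (j + 1))| + |σ (i + (j + 1))|) * v ^ j
        = ∑ j ∈ Finset.range (n - (i + 1)), (|π (i + 1 + j)| + |σ (i + 1 + j)|) * v ^ j := by
      apply Finset.sum_congr rfl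
      intro j _
      have hij : i + (j + 1) = i + 1 + j := by omega
      rw [hij]
    simp only [hE, h1, h2, Nat.add_zero, h3]
  -- main induction
  have main : ∀ k, k ≤ n →
      |s (n - k)| ≤ (1 + u) ^ (2 * k) * T (n - k) ∧
      E (n - k) ≤ ((1 + u) ^ (2 * k) - 1) * T (n - k) := by
    intro k
    induction k with
    | zero =>
      intro _
      constructor
      · have h1 : n + 1 - n = 1 := by omega
        simp only [Nat.sub_zero, hsn, Nat.mul_zero, pow_zero, one_mul, hT, h1,
          Finset.range_one, Finset.sum_singleton, pow_zero, mul_one, Nat.add_zero, le_refl]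
      · simp only [Nat.sub_zero, hE, Nat.sub_self, Finset.range_zero, Finset.sum_empty,
          Nat.mul_zero, pow_zero, sub_self, zero_mul, le_refl]
    | succ k ih =>
      intro hk
      obtain ⟨ihs, ihE⟩ := ih (by omega)
      set i := n - (k + 1) with hi
      have hilt : i < n := by omega
      have hi1 : n - k = i + 1 := by omega
      rw [hi1] at ihs ihE
      set c := (1 + u) ^ (2 * k) with hc
      have hc1 : 1 ≤ c := one_le_pow₀ (by linarith)
      have hcpow : (1 + u) ^ (2 * (k + 1)) = c * (1 + u) ^ 2 := by
        rw [hc, ← pow_add]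
        congr 1 <;> omega
      have hεi := hεu i hilt
      have hδi := hδu i hilt
      have hεi' : -u ≤ ε i ∧ ε i ≤ u := abs_le.mp hεi
      have hδi' : -u ≤ δ i ∧ δ i ≤ u := abs_le.mp hδi
      have hS1 : 0 ≤ |s (i + 1)| := abs_nonneg _
      have hT1 : 0 ≤ T (i + 1) := hT0 _
      have hai : 0 ≤ |a i| := abs_nonneg _
      have hεab : |1 + ε i| ≤ 1 + u := by
        rw [abs_le]; constructor <;> nlinarith [hεi'.1, hεi'.2]
      have hδab : |1 + δ i| ≤ 1 + u := by
        rw [abs_le]; constructor <;> nlinarith [hδi'.1, hδi'.2]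
      -- bound on |p i + a i|
      have hpa : |p i + a i| ≤ |s (i + 1)| * v * (1 + u) + |a i| := by
        calc |p i + a i| ≤ |p i| + |a i| := abs_add_le _ _
          _ ≤ |s (i + 1)| * v * (1 + u) + |a i| := by
              rw [hp i hilt]
              have he : |s (i + 1) * x * (1 + ε i)| = |s (i + 1)| * v * |1 + ε i| := by
                rw [abs_mul, abs_mul, hv]
              rw [he]
              have := mul_le_mul_of_nonneg_left hεab (mul_nonneg hS1 hv0)
              linarith
      have hpa0 : (0:ℝ) ≤ |s (i + 1)| * v * (1 + u) + |a i| := by positivity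
      -- bound on |s i|
      have hsb : |s i| ≤ (|s (i + 1)| * v * (1 + u) + |a i|) * (1 + u) := by
        rw [hs i hilt, abs_mul]
        exact mul_le_mul hpa hδab (abs_nonneg _) hpa0
      -- bound on |π i|
      have hπb : |π i| ≤ |s (i + 1)| * v * u := by
        rw [hπ i hilt, hp i hilt]
        have he : s (i + 1) * x - s (i + 1) * x * (1 + ε i) = -(s (i + 1) * x * ε i) := by
          ring
        rw [he, abs_neg, abs_mul, abs_mul, ← hv]
        exact mul_le_mul_of_nonneg_left hεi (mul_nonneg hS1 hv0)
      -- bound on |σ i|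
      have hσb : |σ i| ≤ (|s (i + 1)| * v * (1 + u) + |a i|) * u := by
        rw [hσ i hilt, hs i hilt]
        have he : p i + a i - (p i + a i) * (1 + δ i) = -((p i + a i) * δ i) := by ring
        rw [he, abs_neg, abs_mul]
        exact mul_le_mul hpa hδi (abs_nonneg _) hpa0
      have hSc : |s (i + 1)| ≤ c * T (i + 1) := ihs
      have hTi : T i = |a i| + v * T (i + 1) := hTrec i hilt
      have hEi : E i = (|π i| + |σ i|) + v * E (i + 1) := hErec i hilt
      have hSv : |s (i + 1)| * v ≤ c * T (i + 1) * v :=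
        mul_le_mul_of_nonneg_right hSc hv0
      have hexp : (1 + u) ^ 2 = 1 + 2 * u + u * u := by ring
      have hu2 : 0 ≤ u * u := mul_nonneg hu.le hu.le
      have hc2 : (1 : ℝ) * (1 + u) ^ 2 ≤ c * (1 + u) ^ 2 :=
        mul_le_mul_of_nonneg_right hc1 (sq_nonneg _)
      have hfac : (1 + u) ≤ c * (1 + u) ^ 2 := by linarith
      have hgam : u ≤ c * (1 + u) ^ 2 - 1 := by linarith
      have hSv2 : |s (i + 1)| * v * (1 + u) * (1 + u)
          ≤ c * T (i + 1) * v * (1 + u) * (1 + u) := by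
        apply mul_le_mul_of_nonneg_right _ (by linarith)
        exact mul_le_mul_of_nonneg_right hSv (by linarith)
      constructor
      · -- |s i| ≤ (1+u)^(2(k+1)) * T i
        rw [hcpow, hTi]
        have haiu : |a i| * (1 + u) ≤ c * (1 + u) ^ 2 * |a i| := by
          calc |a i| * (1 + u) = (1 + u) * |a i| := by ring
            _ ≤ (c * (1 + u) ^ 2) * |a i| := mul_le_mul_of_nonneg_right hfac hai
        calc |s i| ≤ (|s (i + 1)| * v * (1 + u) + |a i|) * (1 + u) := hsb
          _ = |s (i + 1)| * v * (1 + u) * (1 + u) + |a i| * (1 + u) := by ring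
          _ ≤ c * T (i + 1) * v * (1 + u) * (1 + u) + c * (1 + u) ^ 2 * |a i| := by
              linarith
          _ = c * (1 + u) ^ 2 * (|a i| + v * T (i + 1)) := by ring
      · -- E i ≤ ((1+u)^(2(k+1)) - 1) * T i
        rw [hcpow, hTi, hEi]
        have hEv : v * E (i + 1) ≤ v * ((c - 1) * T (i + 1)) :=
          mul_le_mul_of_nonneg_left ihE hv0
        have hSvu : |s (i + 1)| * v * u ≤ c * T (i + 1) * v * u :=
          mul_le_mul_of_nonneg_right hSv hu.le
        have hSvu2 : |s (i + 1)| * v * (1 + u) * u ≤ c * T (i + 1) * v * (1 + u) * u := by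
          apply mul_le_mul_of_nonneg_right _ hu.le
          exact mul_le_mul_of_nonneg_right hSv (by linarith)
        have haig : |a i| * u ≤ (c * (1 + u) ^ 2 - 1) * |a i| := by
          calc |a i| * u = u * |a i| := by ring
            _ ≤ (c * (1 + u) ^ 2 - 1) * |a i| := mul_le_mul_of_nonneg_right hgam hai
        calc |π i| + |σ i| + v * E (i + 1)
            ≤ |s (i + 1)| * v * u + (|s (i + 1)| * v * (1 + u) + |a i|) * u
              + v * ((c - 1) * T (i + 1)) := by linarith
          _ = |s (i + 1)| * v * u + |s (i + 1)| * v * (1 + u) * u + |a i| * u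
              + (c - 1) * T (i + 1) * v := by ring
          _ ≤ c * T (i + 1) * v * u + c * T (i + 1) * v * (1 + u) * u + |a i| * u
              + (c - 1) * T (i + 1) * v := by linarith
          _ = (c * (1 + u) ^ 2 - 1) * (v * T (i + 1)) + |a i| * u := by ring
          _ ≤ (c * (1 + u) ^ 2 - 1) * (v * T (i + 1))
              + (c * (1 + u) ^ 2 - 1) * |a i| := by linarith
          _ = (c * (1 + u) ^ 2 - 1) * (|a i| + v * T (i + 1)) := by ring
  -- conclude
  obtain ⟨_, hE0⟩ := main n le_rfl
  rw [Nat.sub_self] at hE0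
  have hlhs : ∑ i ∈ Finset.range n, (|π i| + |σ i|) * v ^ i = E 0 := by
    simp only [hE, Nat.sub_zero, Nat.zero_add]
  have hrhs : ∑ i ∈ Finset.range (n + 1), |a i| * v ^ i = T 0 := by
    simp only [hT, Nat.sub_zero, Nat.zero_add]
  rw [hlhs, hrhs]
  have hd : 0 < 1 - 2 * (n : ℝ) * u := by linarith
  have h1 : ((2 * n : ℕ) : ℝ) * u < 1 := by push_cast; linarith
  have h2 := eft_pow_aux u hu.le (2 * n) h1
  push_cast at h2
  have hpow : (1 + u) ^ (2 * n) - 1 ≤ 2 * (n : ℝ) * u / (1 - 2 * (n : ℝ) * u) := by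
    rw [le_div_iff₀ hd]
    linarith [h2]
  calc E 0 ≤ ((1 + u) ^ (2 * n) - 1) * T 0 := hE0
    _ ≤ (2 * (n : ℝ) * u / (1 - 2 * (n : ℝ) * u)) * T 0 :=
        mul_le_mul_of_nonneg_right hpow (hT0 0)
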